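/- Let P be a product probability density on bitstrings of length n, let z be any bitstring, and let 0 ≤ r ≤ n. Set q = P(z)^{1/n}. Then the probability of the Hamming ball of radius r around z satisfies ∑_{x : D_H(x,z) ≤ r} P(x) ≥ ∑_{k=0}^{r} C(n,k) · q^{n−k} · (1 − q)^{k}, where C(n,k) denotes the binomial coefficient. -/
import Mathlib

open Finset

namespace HammingBallAux

variable {ι : Type*} [Fintype ι] [DecidableEq ι]

/-- Probability of the Hamming ball of radius `r`, expressed as a sum over the
set of mismatch positions, for match probabilities `p`. -/
noncomputable def ballSum (p : ι → ℝ) (r : ℕ) : ℝ :=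
  ∑ S ∈ (Finset.univ : Finset ι).powerset,
    if S.card ≤ r then (∏ i ∈ S, (1 - p i)) * ∏ i ∈ Sᶜ, p i else 0

lemma ballSum_nonneg (p : ι → ℝ) (hp : ∀ k, 0 ≤ p k ∧ p k ≤ 1) (r : ℕ) :
    0 ≤ ballSum p r := by
  refine Finset.sum_nonneg fun S _ => ?_
  split
  · exact mul_nonneg (Finset.prod_nonneg fun i _ => by linarith [(hp i).2])
      (Finset.prod_nonneg fun i _ => (hp i).1)
  · exact le_rfl

lemma ballSum_expand (P : ι → ℝ) (r : ℕ) {i j : ι} (hij : i ≠ j) :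
    ballSum P r =
      ∑ T ∈ ((Finset.univ.erase i).erase j).powerset,
        (((if T.card ≤ r then (∏ k ∈ T, (1 - P k)) * ∏ k ∈ Tᶜ, P k else 0)
          + (if (insert j T).card ≤ r then
              (∏ k ∈ insert j T, (1 - P k)) * ∏ k ∈ (insert j T)ᶜ, P k else 0))
         + ((if (insert i T).card ≤ r then
              (∏ k ∈ insert i T, (1 - P k)) * ∏ k ∈ (insert i T)ᶜ, P k else 0)
          + (if (insert i (insert j T)).card ≤ r then
              (∏ k ∈ insert i (insert j T), (1 - P k)) *
                ∏ k ∈ (insert i (insert j T))ᶜ, P k else 0))) := by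
  classical
  set u : Finset ι := (Finset.univ.erase i).erase j with hu
  have hju : j ∉ u := by simp [hu]
  have hiu : i ∉ insert j u := by simp [hu, hij]
  have huniv : (Finset.univ : Finset ι) = insert i (insert j u) := by
    ext k
    by_cases hk1 : k = i <;> by_cases hk2 : k = j <;> simp [hu, hk1, hk2]
  rw [ballSum, huniv, Finset.sum_powerset_insert hiu, Finset.sum_powerset_insert hju,
    Finset.sum_powerset_insert hju, ← Finset.sum_add_distrib, ← Finset.sum_add_distrib,
    ← Finset.sum_add_distrib]

lemma term_eval (P : ι → ℝ) {i j : ι} (hij : i ≠ j) (r : ℕ) (T : Finset ι)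
    (hT : T ⊆ (Finset.univ.erase i).erase j) :
    (((if T.card ≤ r then (∏ k ∈ T, (1 - P k)) * ∏ k ∈ Tᶜ, P k else 0)
      + (if (insert j T).card ≤ r then
          (∏ k ∈ insert j T, (1 - P k)) * ∏ k ∈ (insert j T)ᶜ, P k else 0))
     + ((if (insert i T).card ≤ r then
          (∏ k ∈ insert i T, (1 - P k)) * ∏ k ∈ (insert i T)ᶜ, P k else 0)
      + (if (insert i (insert j T)).card ≤ r then
          (∏ k ∈ insert i (insert j T), (1 - P k)) *
            ∏ k ∈ (insert i (insert j T))ᶜ, P k else 0)))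
    = ((if T.card ≤ r then 1 else 0) * (P i * P j)
        + (if T.card + 1 ≤ r then 1 else 0) * ((1 - P j) * P i + (1 - P i) * P j)
        + (if T.card + 2 ≤ r then 1 else 0) * ((1 - P i) * (1 - P j)))
      * ((∏ k ∈ T, (1 - P k)) * ∏ k ∈ ((Finset.univ.erase i).erase j) \ T, P k) := by
  classical
  set u : Finset ι := (Finset.univ.erase i).erase j with hu
  have hiu : i ∉ u := by simp [hu]
  have hju : j ∉ u := by simp [hu]
  have hiT : i ∉ T := fun h => hiu (hT h)
  have hjT : j ∉ T := fun h => hju (hT h)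
  have hiuT : i ∉ u \ T := fun h => hiu (Finset.mem_sdiff.1 h).1
  have hjuT : j ∉ u \ T := fun h => hju (Finset.mem_sdiff.1 h).1
  have hijT : i ∉ insert j T := by simp [hij, hiT]
  have hjiT : j ∉ insert i T := by simp [Ne.symm hij, hjT]
  have hiujT : i ∉ insert j (u \ T) := by simp [hij, hiuT]
  -- complements
  have hmem : ∀ k : ι, k ∈ Tᶜ ↔ k = i ∨ k = j ∨ k ∈ u \ T := by
    intro k
    by_cases hk1 : k = i <;> by_cases hk2 : k = j <;>
      simp [hu, Finset.mem_compl, Finset.mem_sdiff, hk1, hk2, hiT, hjT]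
  have hc1 : Tᶜ = insert i (insert j (u \ T)) := by
    ext k; simp only [Finset.mem_insert, hmem k]
  have hc2 : (insert j T)ᶜ = insert i (u \ T) := by
    ext k
    by_cases hk1 : k = i <;> by_cases hk2 : k = j <;>
      simp [hu, Finset.mem_compl, Finset.mem_sdiff, hk1, hk2, hiT, hjT, hij, Ne.symm hij]
  have hc3 : (insert i T)ᶜ = insert j (u \ T) := by
    ext k
    by_cases hk1 : k = i <;> by_cases hk2 : k = j <;>
      simp [hu, Finset.mem_compl, Finset.mem_sdiff, hk1, hk2, hiT, hjT, hij, Ne.symm hij]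
  have hc4 : (insert i (insert j T))ᶜ = u \ T := by
    ext k
    by_cases hk1 : k = i <;> by_cases hk2 : k = j <;>
      simp [hu, Finset.mem_compl, Finset.mem_sdiff, hk1, hk2, hiT, hjT, hij, Ne.symm hij]
  rw [hc1, hc2, hc3, hc4]
  rw [Finset.card_insert_of_notMem hjT, Finset.card_insert_of_notMem hiT,
    Finset.card_insert_of_notMem hijT, Finset.card_insert_of_notMem hjT]
  simp only [Finset.prod_insert hiujT, Finset.prod_insert hjuT, Finset.prod_insert hiuT,
    Finset.prod_insert hijT, Finset.prod_insert hjT, Finset.prod_insert hjiT,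
    Finset.prod_insert hiT, show T.card + 1 + 1 = T.card + 2 from rfl]
  split_ifs <;> ring

lemma ballSum_swap_le (p : ι → ℝ) (r : ℕ) {i j : ι} (hij : i ≠ j)
    (hp : ∀ k, 0 ≤ p k ∧ p k ≤ 1)
    {a b a' b' : ℝ}
    (ha : 0 ≤ a) (ha1 : a ≤ 1) (hb : 0 ≤ b) (hb1 : b ≤ 1)
    (ha' : 0 ≤ a') (ha1' : a' ≤ 1) (hb' : 0 ≤ b') (hb1' : b' ≤ 1)
    (hprod : a * b = a' * b') (hsum : a' + b' ≤ a + b) :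
    ballSum (Function.update (Function.update p i a') j b') r ≤
      ballSum (Function.update (Function.update p i a) j b) r := by
  classical
  rw [ballSum_expand _ r hij, ballSum_expand _ r hij]
  refine Finset.sum_le_sum fun T hT => ?_
  have hTu := Finset.mem_powerset.1 hT
  rw [term_eval _ hij r T hTu, term_eval _ hij r T hTu]
  have hvi : ∀ c d : ℝ, Function.update (Function.update p i c) j d i = c := by
    intro c d; rw [Function.update_of_ne hij, Function.update_self]
  have hvj : ∀ c d : ℝ, Function.update (Function.update p i c) j d j = d := fun c d =>
    Function.update_self _ _ _
  have hw : ∀ c d : ℝ,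
      (∏ k ∈ T, (1 - Function.update (Function.update p i c) j d k)) *
        ∏ k ∈ ((Finset.univ.erase i).erase j) \ T,
          Function.update (Function.update p i c) j d k
      = (∏ k ∈ T, (1 - p k)) * ∏ k ∈ ((Finset.univ.erase i).erase j) \ T, p k := by
    intro c d
    congr 1
    · refine Finset.prod_congr rfl fun k hk => ?_
      have hk' := hTu hk
      simp only [Finset.mem_erase] at hk'
      rw [Function.update_of_ne hk'.1, Function.update_of_ne hk'.2.1]
    · refine Finset.prod_congr rfl fun k hk => ?_
      have hk' := (Finset.mem_sdiff.1 hk).1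
      simp only [Finset.mem_erase] at hk'
      rw [Function.update_of_ne hk'.1, Function.update_of_ne hk'.2.1]
  rw [hvi, hvi, hvj, hvj, hw, hw]
  have hW : 0 ≤ (∏ k ∈ T, (1 - p k)) *
      ∏ k ∈ ((Finset.univ.erase i).erase j) \ T, p k :=
    mul_nonneg (Finset.prod_nonneg fun k _ => by linarith [(hp k).2])
      (Finset.prod_nonneg fun k _ => (hp k).1)
  set W : ℝ := (∏ k ∈ T, (1 - p k)) *
      ∏ k ∈ ((Finset.univ.erase i).erase j) \ T, p k with hWdef
  split_ifs with h0 h1 h2 h2' h1' h2'' h2''' <;>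
    first
      | (exfalso; omega)
      | nlinarith [mul_le_mul_of_nonneg_right hsum hW, hprod, hW,
          mul_nonneg hW (mul_nonneg ha hb), mul_nonneg hW (mul_nonneg ha' hb')]

lemma ballSum_const (q : ℝ) (r : ℕ) (hr : r ≤ Fintype.card ι) :
    ballSum (fun _ : ι => q) r
      = ∑ k ∈ Finset.range (r + 1),
          ((Fintype.card ι).choose k : ℝ) * q ^ (Fintype.card ι - k) * (1 - q) ^ k := by
  classical
  rw [ballSum, Finset.sum_powerset]
  have h1 : ∀ jj ∈ Finset.range ((Finset.univ : Finset ι).card + 1),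
      (∑ T ∈ Finset.powersetCard jj (Finset.univ : Finset ι),
        if T.card ≤ r then (∏ _i ∈ T, (1 - q)) * ∏ _i ∈ Tᶜ, (q : ℝ) else 0)
      = if jj ≤ r then
          ((Fintype.card ι).choose jj : ℝ) * q ^ (Fintype.card ι - jj) * (1 - q) ^ jj
        else 0 := by
    intro jj _
    have h2 : ∀ T ∈ Finset.powersetCard jj (Finset.univ : Finset ι),
        (if T.card ≤ r then (∏ _i ∈ T, (1 - q)) * ∏ _i ∈ Tᶜ, (q : ℝ) else 0)
        = if jj ≤ r then (1 - q) ^ jj * q ^ (Fintype.card ι - jj) else 0 := by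
      intro T hT
      have hcard : T.card = jj := (Finset.mem_powersetCard.1 hT).2
      have hcc : Tᶜ.card = Fintype.card ι - jj := by
        rw [Finset.card_compl, hcard]
      rw [Finset.prod_const, Finset.prod_const, hcard, hcc]
    rw [Finset.sum_congr rfl h2, Finset.sum_const, Finset.card_powersetCard,
      Finset.card_univ]
    split_ifs
    · rw [nsmul_eq_mul]; ring
    · simp
  rw [Finset.sum_congr rfl h1, ← Finset.sum_filter]
  have h3 : (Finset.range ((Finset.univ : Finset ι).card + 1)).filter (fun jj => jj ≤ r)
      = Finset.range (r + 1) := by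
    ext k
    simp only [Finset.mem_filter, Finset.mem_range, Finset.card_univ]
    omega
  rw [h3]

lemma binom_le_ballSum (q : ℝ) (hq0 : 0 < q) (hq1 : q ≤ 1) (r : ℕ)
    (hr : r ≤ Fintype.card ι) :
    ∀ m : ℕ, ∀ p : ι → ℝ, (∀ k, 0 ≤ p k ∧ p k ≤ 1) →
      (∏ i, p i) = q ^ Fintype.card ι →
      (Finset.univ.filter fun k => p k ≠ q).card ≤ m →
      (∑ k ∈ Finset.range (r + 1),
        ((Fintype.card ι).choose k : ℝ) * q ^ (Fintype.card ι - k) * (1 - q) ^ k)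
        ≤ ballSum p r := by
  intro m
  induction m with
  | zero =>
      intro p hp hprod hcard
      have hall : ∀ k, p k = q := by
        intro k
        by_contra hk
        have hmem : k ∈ Finset.univ.filter fun k => p k ≠ q := by simp [hk]
        have := Finset.card_pos.2 ⟨k, hmem⟩
        omega
      rw [funext hall, ballSum_const q r hr]
  | succ m ih =>
      intro p hp hprod hcard
      by_cases hall : ∀ k, p k = q
      · rw [funext hall, ballSum_const q r hr]
      · push_neg at hall
        have hppos : ∀ k, 0 < p k := by
          intro k
          rcases (hp k).1.eq_or_lt with h | h
          · exfalso
            have h0 : (∏ i, p i) = 0 := Finset.prod_eq_zero (Finset.mem_univ k) h.symm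
            rw [hprod] at h0
            exact (pow_pos hq0 _).ne' h0
          · exact h
        have hlow : ∃ i0, p i0 < q := by
          by_contra hc
          push_neg at hc
          obtain ⟨i, hi⟩ := hall
          have hlt : (∏ _i : ι, q) < ∏ i, p i :=
            Finset.prod_lt_prod (fun _ _ => hq0) (fun k _ => hc k)
              ⟨i, Finset.mem_univ i, (hc i).lt_of_ne (Ne.symm hi)⟩
          rw [Finset.prod_const, Finset.card_univ, hprod] at hlt
          exact lt_irrefl _ hlt
        have hhigh : ∃ j0, q < p j0 := by
          by_contra hc
          push_neg at hc
          obtain ⟨i, hi⟩ := hall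
          have hlt : (∏ i, p i) < ∏ _i : ι, q :=
            Finset.prod_lt_prod (fun k _ => hppos k) (fun k _ => hc k)
              ⟨i, Finset.mem_univ i, (hc i).lt_of_ne hi⟩
          rw [Finset.prod_const, Finset.card_univ, hprod] at hlt
          exact lt_irrefl _ hlt
        obtain ⟨i0, hi0⟩ := hlow
        obtain ⟨j0, hj0⟩ := hhigh
        have hij : i0 ≠ j0 := fun h => absurd (h ▸ hi0) (not_lt.2 hj0.le)
        set b' : ℝ := p i0 * p j0 / q with hb'def
        have hb'0 : 0 ≤ b' := div_nonneg (mul_nonneg (hp i0).1 (hp j0).1) hq0.le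
        have hb'1 : b' ≤ 1 := by
          rw [hb'def, div_le_one hq0]
          nlinarith [(hp j0).2, (hp i0).1, hi0]
        have hqb' : q * b' = p i0 * p j0 := by
          rw [hb'def]; field_simp
        have hp'bounds : ∀ k,
            0 ≤ Function.update (Function.update p i0 q) j0 b' k ∧
              Function.update (Function.update p i0 q) j0 b' k ≤ 1 := by
          intro k
          by_cases hk : k = j0
          · subst hk; rw [Function.update_self]; exact ⟨hb'0, hb'1⟩
          · rw [Function.update_of_ne hk]
            by_cases hk' : k = i0
            · subst hk'; rw [Function.update_self]; exact ⟨hq0.le, hq1⟩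
            · rw [Function.update_of_ne hk']; exact hp k
        have hprod' : (∏ i, Function.update (Function.update p i0 q) j0 b' i)
            = q ^ Fintype.card ι := by
          rw [Finset.prod_update_of_mem (Finset.mem_univ j0),
            Finset.sdiff_singleton_eq_erase,
            Finset.prod_update_of_mem (Finset.mem_erase.2 ⟨hij, Finset.mem_univ i0⟩),
            Finset.sdiff_singleton_eq_erase]
          have e1 : p j0 * ∏ k ∈ Finset.univ.erase j0, p k = ∏ k, p k :=
            Finset.mul_prod_erase _ _ (Finset.mem_univ j0)
          have e2 : p i0 * ∏ k ∈ (Finset.univ.erase j0).erase i0, p k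
              = ∏ k ∈ Finset.univ.erase j0, p k :=
            Finset.mul_prod_erase _ _ (Finset.mem_erase.2 ⟨hij, Finset.mem_univ i0⟩)
          have e3 : b' * (q * ∏ k ∈ (Finset.univ.erase j0).erase i0, p k)
              = p j0 * (p i0 * ∏ k ∈ (Finset.univ.erase j0).erase i0, p k) := by
            rw [← mul_assoc, mul_comm b' q, hqb']; ring
          rw [e3, e2, e1, hprod]
        have hcard' :
            (Finset.univ.filter fun k =>
              Function.update (Function.update p i0 q) j0 b' k ≠ q).card ≤ m := by
          have hsub : (Finset.univ.filter fun k =>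
                Function.update (Function.update p i0 q) j0 b' k ≠ q)
              ⊆ (Finset.univ.filter fun k => p k ≠ q).erase i0 := by
            intro k hk
            simp only [Finset.mem_filter, Finset.mem_univ, true_and] at hk
            have hki : k ≠ i0 := by
              intro h; subst h
              apply hk
              rw [Function.update_of_ne hij, Function.update_self]
            refine Finset.mem_erase.2 ⟨hki, Finset.mem_filter.2 ⟨Finset.mem_univ _, ?_⟩⟩
            by_cases hkj : k = j0
            · subst hkj; exact hj0.ne'
            · rw [Function.update_of_ne hkj, Function.update_of_ne hki] at hk; exact hk
          have hmem : i0 ∈ Finset.univ.filter fun k => p k ≠ q := by simp [hi0.ne]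
          have hle := Finset.card_le_card hsub
          rw [Finset.card_erase_of_mem hmem] at hle
          omega
        refine le_trans (ih _ hp'bounds hprod' hcard') ?_
        have hsum : q + b' ≤ p i0 + p j0 := by
          have key : q * (q + b') ≤ q * (p i0 + p j0) := by
            nlinarith [hqb', mul_nonneg (by linarith : (0:ℝ) ≤ q - p i0)
              (by linarith : (0:ℝ) ≤ p j0 - q)]
          exact le_of_mul_le_mul_left key hq0
        have hrep : p = Function.update (Function.update p i0 (p i0)) j0 (p j0) := by
          rw [Function.update_eq_self, Function.update_eq_self]
        conv_rhs => rw [hrep]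
        exact ballSum_swap_le p r hij hp (hp i0).1 (hp i0).2 (hp j0).1 (hp j0).2
          hq0.le hq1 hb'0 hb'1 hqb'.symm hsum

lemma sum_ball (p : ι → ℝ) (z : ι → Bool) (r : ℕ) :
    ∑ x ∈ Finset.univ.filter (fun x : ι → Bool => hammingDist x z ≤ r),
      (∏ i, if x i = z i then p i else 1 - p i) = ballSum p r := by
  classical
  rw [Finset.sum_filter, ballSum]
  refine Finset.sum_nbij' (fun x : ι → Bool => Finset.univ.filter fun k => x k ≠ z k)
    (fun S : Finset ι => fun k => if k ∈ S then !(z k) else z k)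
    (fun x _ => Finset.mem_powerset.2 (Finset.subset_univ _))
    (fun S _ => Finset.mem_univ _) ?_ ?_ ?_
  · intro x _
    funext k
    by_cases h : x k = z k
    · simp [h]
    · simp only [Finset.mem_filter, Finset.mem_univ, true_and, if_pos h]
      revert h; cases x k <;> cases z k <;> simp
  · intro S _
    ext k
    by_cases h : k ∈ S <;> simp [h]
  · intro x _
    have hdist : hammingDist x z = (Finset.univ.filter fun k => x k ≠ z k).card := rfl
    rw [hdist]
    by_cases h : (Finset.univ.filter fun k => x k ≠ z k).card ≤ r
    · rw [if_pos h, if_pos h]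
      rw [← Finset.prod_filter_mul_prod_filter_not Finset.univ
        (fun k => x k ≠ z k) (fun i => if x i = z i then p i else 1 - p i)]
      congr 1
      · refine Finset.prod_congr rfl fun k hk => ?_
        rw [if_neg (Finset.mem_filter.1 hk).2]
      · rw [Finset.compl_filter]
        refine Finset.prod_congr rfl fun k hk => ?_
        rw [if_pos (not_not.1 (Finset.mem_filter.1 hk).2)]
    · rw [if_neg h, if_neg h]

end HammingBallAux

/-- Paper: Appendix Lemma 3.
Let `P` be a product probability density on bitstrings of length `n`, `z` any
bitstring, and `0 ≤ r ≤ n`. With `q = P z ^ (1/n)`, the probability of the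
Hamming ball of radius `r` around `z` satisfies
`∑_{x : D_H(x,z) ≤ r} P x ≥ ∑_{k=0}^{r} C(n,k) q^(n-k) (1-q)^k`. -/
theorem hammingBall_prob_ge_binomial_sum
    (n r : ℕ) (hr : r ≤ n) (q : Fin n → ℝ) (hq : ∀ i, 0 ≤ q i ∧ q i ≤ 1)
    (P : (Fin n → Bool) → ℝ)
    (hP : ∀ x, P x = ∏ i, if x i then q i else 1 - q i)
    (z : Fin n → Bool) :
    ∑ k ∈ Finset.range (r + 1),
        (n.choose k : ℝ) * (P z ^ ((1 : ℝ) / n)) ^ (n - k)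
          * (1 - P z ^ ((1 : ℝ) / n)) ^ k
      ≤ ∑ x ∈ Finset.univ.filter (fun x => hammingDist x z ≤ r), P x := by
  classical
  open HammingBallAux in
  by_cases hn : n = 0
  · subst hn
    have hr0 : r = 0 := Nat.le_zero.1 hr
    subst hr0
    have hzx : ∀ x : Fin 0 → Bool, hammingDist x z = 0 := fun x => by
      rw [Subsingleton.elim x z, hammingDist_self]
    rw [Finset.filter_true_of_mem (fun x _ => by rw [hzx x])]
    simp [hP]
  · set Q : ℝ := P z ^ ((1 : ℝ) / n) with hQdef
    set p : Fin n → ℝ := fun i => if z i then q i else 1 - q i with hpdef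
    have hpb : ∀ k, 0 ≤ p k ∧ p k ≤ 1 := by
      intro k
      by_cases h : z k
      · simpa [hpdef, h] using hq k
      · have hk : p k = 1 - q k := by simp [hpdef, h]
        rw [hk]
        constructor
        · linarith [(hq k).2]
        · linarith [(hq k).1]
    have hPz : P z = ∏ i, p i := by
      rw [hP]
    have hPz0 : 0 ≤ P z := by
      rw [hPz]; exact Finset.prod_nonneg fun i _ => (hpb i).1
    have hPz1 : P z ≤ 1 := by
      rw [hPz]
      exact Finset.prod_le_one (fun i _ => (hpb i).1) (fun i _ => (hpb i).2)
    have hQ0 : 0 ≤ Q := Real.rpow_nonneg hPz0 _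
    have hQ1 : Q ≤ 1 := Real.rpow_le_one hPz0 hPz1 (by positivity)
    have hQn : Q ^ n = P z := by
      rw [hQdef, ← Real.rpow_natCast (P z ^ ((1 : ℝ) / n)) n, ← Real.rpow_mul hPz0,
        one_div, inv_mul_cancel₀ (by exact_mod_cast hn : (n : ℝ) ≠ 0), Real.rpow_one]
    have hRHS : ∑ x ∈ Finset.univ.filter (fun x => hammingDist x z ≤ r), P x
        = ballSum p r := by
      rw [← sum_ball p z r]
      refine Finset.sum_congr rfl fun x _ => ?_
      rw [hP]
      refine Finset.prod_congr rfl fun i _ => ?_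
      by_cases h : z i <;> cases hx : x i <;> simp [hpdef, h, hx]
    rw [hRHS]
    by_cases hQz : Q = 0
    · rw [hQz]
      by_cases hrn : r = n
      · rw [hrn]
        have hball : ballSum p n = 1 := by
          rw [HammingBallAux.ballSum]
          have hterm : ∀ S ∈ (Finset.univ : Finset (Fin n)).powerset,
              (if S.card ≤ n then (∏ i ∈ S, (1 - p i)) * ∏ i ∈ Sᶜ, p i else 0)
              = (∏ i ∈ S, (1 - p i)) * ∏ i ∈ Finset.univ \ S, p i := by
            intro S hS
            rw [if_pos (le_trans (Finset.card_le_card (Finset.mem_powerset.1 hS))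
              (by simp)), Finset.compl_eq_univ_sdiff]
          rw [Finset.sum_congr rfl hterm, ← Finset.prod_add]
          simp
        rw [hball]
        have hterm2 : ∀ k ∈ Finset.range (n + 1),
            (n.choose k : ℝ) * (0 : ℝ) ^ (n - k) * (1 - 0) ^ k
            = if k = n then 1 else 0 := by
          intro k hk
          rcases eq_or_ne k n with h | h
          · subst h; simp
          · have : n - k ≠ 0 := by
              simp only [Finset.mem_range] at hk; omega
            simp [zero_pow this, h]
        rw [Finset.sum_congr rfl hterm2, Finset.sum_ite_eq' (Finset.range (n + 1)) n]
        simp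
      · have hterm : ∀ k ∈ Finset.range (r + 1),
            (n.choose k : ℝ) * (0 : ℝ) ^ (n - k) * (1 - 0) ^ k = 0 := by
          intro k hk
          simp only [Finset.mem_range] at hk
          have : n - k ≠ 0 := by omega
          simp [zero_pow this]
        rw [Finset.sum_congr rfl hterm, Finset.sum_const, smul_zero]
        exact ballSum_nonneg p hpb r
    · have hQpos : 0 < Q := lt_of_le_of_ne hQ0 (Ne.symm hQz)
      have hprodp : (∏ i, p i) = Q ^ Fintype.card (Fin n) := by
        rw [Fintype.card_fin, ← hPz] at *
        exact hQn.symm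
      have hmain := binom_le_ballSum Q hQpos hQ1 r
        (by rw [Fintype.card_fin]; exact hr)
        (Finset.univ.filter fun k => p k ≠ Q).card p hpb hprodp le_rfl
      simpa [Fintype.card_fin] using hmain
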